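/- Define F : ℝ² → ℝ² by F(x,y) = (1,0) if y = 0 and x < 0; F(x,y) = (0,−1) if x = 0 and y > 0; and F(x,y) = (1,−1) otherwise. Then: (i) through every point of ℝ² there is a unique complete integral curve of F, defining a semiflow Φ : ℝ² × ℝ₊ → ℝ²; (ii) for every point P of E¹ = {(x,0) : x < 0} or of E² = {(0,y) : y > 0} and every t > 0, the map X ↦ Φ(X,t) is discontinuous at P; (iii) for every t ≥ 0, the map X ↦ Φ(X,t) is continuous at the origin (0,0). -/

import Mathlib

open Set Filter Topology

/-- The domain `[0, T)`, where `T ∈ (0, ∞]` is encoded as an `EReal`. -/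
def eDom (T : EReal) : Set ℝ := {t : ℝ | 0 ≤ t ∧ (t : EReal) < T}

/-- `φ` is an integral curve of the (possibly discontinuous) vector field `F` on `[0,T)`
with initial condition `X₀`: `φ` is continuous on `[0,T)`, `φ 0 = X₀`, and there is a
closed countable subset `D` of `[0,T)` containing `0` such that for every `u ∈ D` there is
`v ∈ D ∪ {T}` with `v > u`, `(u,v) ∩ D = ∅`, `φ` is `C¹` on `(u,v)` with `φ' = F ∘ φ`
there, and `φ'(t) → F(φ(u))` as `t → u+`; moreover, the intervals `[u,v)` cover `[0,T)`. -/
def IsNetIntegralCurve {E : Type*} [NormedAddCommGroup E] [NormedSpace ℝ E]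
    (F : E → E) (X₀ : E) (T : EReal) (φ : ℝ → E) : Prop :=
  0 < T ∧ φ 0 = X₀ ∧ ContinuousOn φ (eDom T) ∧
  ∃ D : Set ℝ, D.Countable ∧ (0 : ℝ) ∈ D ∧ D ⊆ eDom T ∧ closure D ∩ eDom T ⊆ D ∧
    (∀ u ∈ D, ∃ v : EReal, ((∃ w ∈ D, (w : EReal) = v) ∨ v = T) ∧ (u : EReal) < v ∧
      (∀ w ∈ D, (u : EReal) < (w : EReal) → v ≤ (w : EReal)) ∧
      (∀ t : ℝ, (u : EReal) < (t : EReal) → (t : EReal) < v → HasDerivAt φ (F (φ t)) t) ∧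
      ContinuousOn (fun t => F (φ t)) {t : ℝ | (u : EReal) < (t : EReal) ∧ (t : EReal) < v} ∧
      Tendsto (fun t => F (φ t)) (𝓝[>] u) (𝓝 (F (φ u)))) ∧
    (∀ t ∈ eDom T, ∃ u ∈ D, u ≤ t ∧ Ioc u t ∩ D = ∅)

/-- The amenability trajectory condition: through every point `X` there is an integral
curve of the network vector field, defined on some interval `[0, t(X))` with `t(X) > 0`,
that stays in the event set `E^{ℰ(X)}` of `X`. -/
def AmenableTraj {E A : Type*} [NormedAddCommGroup E] [NormedSpace ℝ E]
    (f : A → E → E) (ℰ : E → A) : Prop :=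
  ∀ X : E, ∃ tX : ℝ, 0 < tX ∧ ∃ φ : ℝ → E,
    IsNetIntegralCurve (fun Y => f (ℰ Y) Y) X (tX : EReal) φ ∧
    ∀ t : ℝ, 0 ≤ t → t < tX → ℰ (φ t) = ℰ X

/-- The vector field of examples 4.8(2) / 4.12(1): `(1,0)` on `E¹ = {(x,0) : x < 0}`,
`(0,-1)` on `E² = {(0,y) : y > 0}`, and `(1,-1)` otherwise. -/
noncomputable def F₁₃ : ℝ × ℝ → ℝ × ℝ := fun X =>
  if X.2 = 0 ∧ X.1 < 0 then (1, 0)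
  else if X.1 = 0 ∧ 0 < X.2 then (0, -1)
  else (1, -1)

-- ### basic facts about F₁₃
lemma F_one {Y : ℝ × ℝ} (h1 : Y.2 = 0) (h2 : Y.1 < 0) : F₁₃ Y = (1, 0) := by
  simp [F₁₃, h1, h2]

lemma F_two {Y : ℝ × ℝ} (h1 : Y.1 = 0) (h2 : 0 < Y.2) : F₁₃ Y = (0, -1) := by
  simp [F₁₃, h1, h2, h2.ne', not_lt.2 h2.le]

lemma F_three {Y : ℝ × ℝ} (h : ¬(Y.2 = 0 ∧ Y.1 < 0)) (h' : ¬(Y.1 = 0 ∧ 0 < Y.2)) :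
    F₁₃ Y = (1, -1) := by
  simp only [F₁₃, if_neg h, if_neg h']

lemma F_fst (Y : ℝ × ℝ) : (F₁₃ Y).1 = 0 ∨ (F₁₃ Y).1 = 1 := by
  unfold F₁₃; split_ifs <;> simp

lemma F_snd (Y : ℝ × ℝ) : (F₁₃ Y).2 = 0 ∨ (F₁₃ Y).2 = -1 := by
  unfold F₁₃; split_ifs <;> simp

lemma eDom_top : eDom ⊤ = Ici (0:ℝ) := by
  ext t; simp [eDom, EReal.coe_lt_top]

section SegBuild
variable (F : ℝ × ℝ → ℝ × ℝ) (X : ℝ × ℝ) (φ : ℝ → ℝ × ℝ)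

lemma seg_prop (u : ℝ) (v : EReal) (c : ℝ × ℝ)
    (huv : (u : EReal) < v)
    (hd : ∀ t : ℝ, u < t → (t : EReal) < v → HasDerivAt φ c t)
    (hc : ∀ t : ℝ, u ≤ t → (t : EReal) < v → F (φ t) = c) :
    (∀ t : ℝ, (u : EReal) < (t : EReal) → (t : EReal) < v → HasDerivAt φ (F (φ t)) t) ∧
    ContinuousOn (fun t => F (φ t)) {t : ℝ | (u : EReal) < (t : EReal) ∧ (t : EReal) < v} ∧
    Tendsto (fun t => F (φ t)) (𝓝[>] u) (𝓝 (F (φ u))) := by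
  obtain ⟨r, hur, hrv⟩ := EReal.lt_iff_exists_real_btwn.1 huv
  rw [EReal.coe_lt_coe_iff] at hur
  have hcu : F (φ u) = c := hc u le_rfl huv
  refine ⟨fun t h1 h2 => ?_, ?_, ?_⟩
  · rw [EReal.coe_lt_coe_iff] at h1
    rw [hc t h1.le h2]; exact hd t h1 h2
  · refine (continuousOn_const (c := c)).congr fun t ht => ?_
    exact hc t (EReal.coe_lt_coe_iff.1 ht.1).le ht.2
  · have hmem : Ioo u r ∈ 𝓝[>] u := Ioo_mem_nhdsGT_of_mem ⟨le_rfl, hur⟩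
    rw [hcu]
    refine tendsto_const_nhds.congr' (eventuallyEq_of_mem hmem fun t ht => ?_).symm
    exact hc t ht.1.le (lt_trans (EReal.coe_lt_coe_iff.2 ht.2) hrv)




lemma build3 (a b : ℝ) (ha : 0 < a) (hab : a < b)
    (hφ : Continuous φ) (h0 : φ 0 = X) (c0 c1 c2 : ℝ × ℝ)
    (hc0 : ∀ t, 0 ≤ t → t < a → F (φ t) = c0)
    (hc1 : ∀ t, a ≤ t → t < b → F (φ t) = c1)
    (hc2 : ∀ t, b ≤ t → F (φ t) = c2)
    (hd0 : ∀ t, 0 < t → t < a → HasDerivAt φ c0 t)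
    (hd1 : ∀ t, a < t → t < b → HasDerivAt φ c1 t)
    (hd2 : ∀ t, b < t → HasDerivAt φ c2 t) :
    IsNetIntegralCurve F X ⊤ φ := by
  have hb : 0 < b := ha.trans hab
  refine ⟨by simp, h0, hφ.continuousOn, {0, a, b}, (Set.toFinite _).countable,
    by simp, ?_, ?_, ?_, ?_⟩
  · rintro u (rfl | rfl | rfl) <;>
      exact ⟨by positivity, EReal.coe_lt_top _⟩
  · rw [(Set.toFinite _).isClosed.closure_eq]
    exact inter_subset_left
  · rintro u (rfl | rfl | rfl)
    · refine ⟨(a : EReal), .inl ⟨a, by simp, rfl⟩, by exact_mod_cast ha, ?_, ?_⟩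
      · rintro w (rfl | rfl | rfl) hw
        · exact absurd (by exact_mod_cast hw) (lt_irrefl _)
        · exact le_rfl
        · exact_mod_cast hab.le
      · exact seg_prop F φ 0 a c0 (by exact_mod_cast ha)
          (fun t h1 h2 => hd0 t h1 (by exact_mod_cast h2))
          (fun t h1 h2 => hc0 t h1 (by exact_mod_cast h2))
    · refine ⟨(b : EReal), .inl ⟨b, by simp, rfl⟩, by exact_mod_cast hab, ?_, ?_⟩
      · rintro w (rfl | rfl | rfl) hw
        · exact absurd (by exact_mod_cast hw) (by simpa using ha.le)
        · exact absurd (by exact_mod_cast hw) (lt_irrefl _)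
        · exact le_rfl
      · exact seg_prop F φ u b c1 (by exact_mod_cast hab)
          (fun t h1 h2 => hd1 t h1 (by exact_mod_cast h2))
          (fun t h1 h2 => hc1 t h1 (by exact_mod_cast h2))
    · refine ⟨⊤, .inr rfl, EReal.coe_lt_top _, ?_, ?_⟩
      · rintro w (rfl | rfl | rfl) hw
        · exact absurd (by exact_mod_cast hw) (by simpa using hb.le)
        · exact absurd (by exact_mod_cast hw) (by simpa using hab.le)
        · exact absurd (by exact_mod_cast hw) (lt_irrefl _)
      · exact seg_prop F φ u ⊤ c2 (EReal.coe_lt_top _)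
          (fun t h1 _ => hd2 t h1)
          (fun t h1 _ => hc2 t h1)
  · intro t ht
    rw [eDom_top] at ht
    rcases lt_or_ge t a with h | h
    · refine ⟨0, by simp, ht, ?_⟩
      ext w; simp only [mem_inter_iff, mem_Ioc, mem_insert_iff, mem_singleton_iff,
        mem_empty_iff_false, iff_false, not_and]
      rintro ⟨hw1, hw2⟩ (rfl | rfl | rfl) <;> linarith
    · rcases lt_or_ge t b with h' | h'
      · refine ⟨a, by simp, h, ?_⟩
        ext w; simp only [mem_inter_iff, mem_Ioc, mem_insert_iff, mem_singleton_iff,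
          mem_empty_iff_false, iff_false, not_and]
        rintro ⟨hw1, hw2⟩ (rfl | rfl | rfl) <;> linarith
      · refine ⟨b, by simp, h', ?_⟩
        ext w; simp only [mem_inter_iff, mem_Ioc, mem_insert_iff, mem_singleton_iff,
          mem_empty_iff_false, iff_false, not_and]
        rintro ⟨hw1, hw2⟩ (rfl | rfl | rfl) <;> linarith

lemma build2 (a : ℝ) (ha : 0 < a)
    (hφ : Continuous φ) (h0 : φ 0 = X) (c0 c1 : ℝ × ℝ)
    (hc0 : ∀ t, 0 ≤ t → t < a → F (φ t) = c0)
    (hc1 : ∀ t, a ≤ t → F (φ t) = c1)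
    (hd0 : ∀ t, 0 < t → t < a → HasDerivAt φ c0 t)
    (hd1 : ∀ t, a < t → HasDerivAt φ c1 t) :
    IsNetIntegralCurve F X ⊤ φ := by
  refine ⟨by simp, h0, hφ.continuousOn, {0, a}, (Set.toFinite _).countable,
    by simp, ?_, ?_, ?_, ?_⟩
  · rintro u (rfl | rfl) <;> exact ⟨by positivity, EReal.coe_lt_top _⟩
  · rw [(Set.toFinite _).isClosed.closure_eq]
    exact inter_subset_left
  · rintro u (rfl | rfl)
    · refine ⟨(a : EReal), .inl ⟨a, by simp, rfl⟩, by exact_mod_cast ha, ?_, ?_⟩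
      · rintro w (rfl | rfl) hw
        · exact absurd (by exact_mod_cast hw) (lt_irrefl _)
        · exact le_rfl
      · exact seg_prop F φ 0 a c0 (by exact_mod_cast ha)
          (fun t h1 h2 => hd0 t h1 (by exact_mod_cast h2))
          (fun t h1 h2 => hc0 t h1 (by exact_mod_cast h2))
    · refine ⟨⊤, .inr rfl, EReal.coe_lt_top _, ?_, ?_⟩
      · rintro w (rfl | rfl) hw
        · exact absurd (by exact_mod_cast hw) (by simpa using ha.le)
        · exact absurd (by exact_mod_cast hw) (lt_irrefl _)
      · exact seg_prop F φ u ⊤ c1 (EReal.coe_lt_top _)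
          (fun t h1 _ => hd1 t h1)
          (fun t h1 _ => hc1 t h1)
  · intro t ht
    rw [eDom_top] at ht
    rcases lt_or_ge t a with h | h
    · refine ⟨0, by simp, ht, ?_⟩
      ext w; simp only [mem_inter_iff, mem_Ioc, mem_insert_iff, mem_singleton_iff,
        mem_empty_iff_false, iff_false, not_and]
      rintro ⟨hw1, hw2⟩ (rfl | rfl) <;> linarith
    · refine ⟨a, by simp, h, ?_⟩
      ext w; simp only [mem_inter_iff, mem_Ioc, mem_insert_iff, mem_singleton_iff,
        mem_empty_iff_false, iff_false, not_and]
      rintro ⟨hw1, hw2⟩ (rfl | rfl) <;> linarith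

lemma build1 (hφ : Continuous φ) (h0 : φ 0 = X) (c0 : ℝ × ℝ)
    (hc0 : ∀ t, 0 ≤ t → F (φ t) = c0)
    (hd0 : ∀ t, 0 < t → HasDerivAt φ c0 t) :
    IsNetIntegralCurve F X ⊤ φ := by
  refine ⟨by simp, h0, hφ.continuousOn, {0}, (Set.toFinite _).countable,
    by simp, ?_, ?_, ?_, ?_⟩
  · rintro u rfl; exact ⟨le_rfl, EReal.coe_lt_top _⟩
  · rw [(Set.toFinite _).isClosed.closure_eq]
    exact inter_subset_left
  · rintro u rfl
    refine ⟨⊤, .inr rfl, EReal.coe_lt_top _, ?_, ?_⟩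
    · rintro w rfl hw
      exact absurd (by exact_mod_cast hw) (lt_irrefl _)
    · exact seg_prop F φ 0 ⊤ c0 (EReal.coe_lt_top _)
        (fun t h1 _ => hd0 t h1)
        (fun t h1 _ => hc0 t h1)
  · intro t ht
    rw [eDom_top] at ht
    refine ⟨0, rfl, ht, ?_⟩
    ext w; simp only [mem_inter_iff, mem_Ioc, mem_singleton_iff,
      mem_empty_iff_false, iff_false, not_and]
    rintro ⟨hw1, hw2⟩ rfl; exact lt_irrefl _ hw1
end SegBuild

noncomputable def Phi : ℝ × ℝ → ℝ → ℝ × ℝ := fun X t =>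
  if 0 ≤ X.2 ∧ X.1 + X.2 < 0 then (X.1 + t, max (X.2 - t) 0 + min (-(X.1 + t)) 0)
  else if X.1 ≤ 0 ∧ 0 < X.1 + X.2 then (min (X.1 + t) 0 + max (t - X.2) 0, X.2 - t)
  else (X.1 + t, X.2 - t)

lemma deriv_of_eqOn {φ g : ℝ → ℝ × ℝ} {c : ℝ × ℝ} {U : Set ℝ} (hU : IsOpen U) {t : ℝ}
    (ht : t ∈ U) (heq : ∀ s ∈ U, φ s = g s) (hg : HasDerivAt g c t) : HasDerivAt φ c t :=
  hg.congr_of_eventuallyEq (eventuallyEq_of_mem (hU.mem_nhds ht) heq)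

lemma hd1 (x y t : ℝ) : HasDerivAt (fun s => (x + s, y - s)) ((1:ℝ), (-1:ℝ)) t := by
  have := (((hasDerivAt_id t).const_add x).prodMk ((hasDerivAt_id t).const_sub y))
  simpa using this
lemma hd2 (x t : ℝ) : HasDerivAt (fun s => (x + s, (0:ℝ))) ((1:ℝ), (0:ℝ)) t :=
  ((hasDerivAt_id t).const_add x).prodMk (hasDerivAt_const t 0)
lemma hd3 (x t : ℝ) : HasDerivAt (fun s => (x + s, -(x + s))) ((1:ℝ), (-1:ℝ)) t := by
  have := ((hasDerivAt_id t).const_add x).prodMk ((hasDerivAt_id t).const_add x).neg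
  simpa using this
lemma hd4 (y t : ℝ) : HasDerivAt (fun s => ((0:ℝ), y - s)) ((0:ℝ), (-1:ℝ)) t := by
  have := (hasDerivAt_const t (0:ℝ)).prodMk ((hasDerivAt_id t).const_sub y)
  simpa using this
lemma hd5 (y t : ℝ) : HasDerivAt (fun s => (s - y, y - s)) ((1:ℝ), (-1:ℝ)) t := by
  have := ((hasDerivAt_id t).sub_const y).prodMk ((hasDerivAt_id t).const_sub y)
  simpa using this

section case1
variable {x y : ℝ} (hy : 0 ≤ y) (hxy : x + y < 0)
include hy hxy

lemma phi1_eq : Phi (x, y) = fun t => (x + t, max (y - t) 0 + min (-(x + t)) 0) := by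
  funext t; simp only [Phi, if_pos (show 0 ≤ (x,y).2 ∧ (x,y).1 + (x,y).2 < 0 from ⟨hy, hxy⟩)]

lemma val1a : ∀ t, t ≤ y → Phi (x, y) t = (x + t, y - t) := by
  intro t ht
  rw [phi1_eq hy hxy]
  simp only
  rw [max_eq_left (by linarith), min_eq_right (by linarith), add_zero]

lemma val1b : ∀ t, y ≤ t → t ≤ -x → Phi (x, y) t = (x + t, 0) := by
  intro t ht ht'
  rw [phi1_eq hy hxy]
  simp only
  rw [max_eq_right (by linarith), min_eq_right (by linarith), add_zero]

lemma val1c : ∀ t, -x ≤ t → Phi (x, y) t = (x + t, -(x + t)) := by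
  intro t ht
  rw [phi1_eq hy hxy]
  simp only
  rw [max_eq_right (by linarith), min_eq_left (by linarith), zero_add]

lemma cont1 : Continuous (Phi (x, y)) := by
  rw [phi1_eq hy hxy]; fun_prop

lemma Fval1a : ∀ t, 0 ≤ t → t < y → F₁₃ (Phi (x, y) t) = (1, -1) := by
  intro t h1 h2
  rw [val1a hy hxy t h2.le]
  exact F_three (by rintro ⟨h, -⟩; simp only at h; linarith)
    (by rintro ⟨h, -⟩; simp only at h; linarith)

lemma Fval1b : ∀ t, y ≤ t → t < -x → F₁₃ (Phi (x, y) t) = (1, 0) := by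
  intro t h1 h2
  rw [val1b hy hxy t h1 h2.le]
  exact F_one rfl (by simp only; linarith)

lemma Fval1c : ∀ t, -x ≤ t → F₁₃ (Phi (x, y) t) = (1, -1) := by
  intro t h1
  rw [val1c hy hxy t h1]
  exact F_three (by rintro ⟨-, h⟩; simp only at h; linarith)
    (by rintro ⟨h, h'⟩; simp only at h h'; linarith)

lemma der1a : ∀ t, 0 < t → t < y → HasDerivAt (Phi (x, y)) ((1:ℝ), (-1:ℝ)) t := by
  intro t h1 h2
  exact deriv_of_eqOn isOpen_Iio (show t ∈ Iio y from h2)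
    (fun s hs => val1a hy hxy s (le_of_lt hs)) (hd1 x y t)

lemma der1b : ∀ t, y < t → t < -x → HasDerivAt (Phi (x, y)) ((1:ℝ), (0:ℝ)) t := by
  intro t h1 h2
  exact deriv_of_eqOn isOpen_Ioo (show t ∈ Ioo y (-x) from ⟨h1, h2⟩)
    (fun s hs => val1b hy hxy s hs.1.le hs.2.le) (hd2 x t)

lemma der1c : ∀ t, -x < t → HasDerivAt (Phi (x, y)) ((1:ℝ), (-1:ℝ)) t := by
  intro t h1
  exact deriv_of_eqOn isOpen_Ioi (show t ∈ Ioi (-x) from h1)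
    (fun s hs => val1c hy hxy s (le_of_lt hs)) (hd3 x t)
end case1

section case2
variable {x y : ℝ} (hx : x ≤ 0) (hxy : 0 < x + y)
include hx hxy

lemma phi2_eq : Phi (x, y) = fun t => (min (x + t) 0 + max (t - y) 0, y - t) := by
  funext t
  simp only [Phi, if_neg (show ¬(0 ≤ (x,y).2 ∧ (x,y).1 + (x,y).2 < 0) by
      rintro ⟨-, h⟩; simp only at h; linarith),
    if_pos (show (x,y).1 ≤ 0 ∧ 0 < (x,y).1 + (x,y).2 from ⟨hx, hxy⟩)]

lemma val2a : ∀ t, t ≤ -x → Phi (x, y) t = (x + t, y - t) := by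
  intro t ht
  rw [phi2_eq hx hxy]
  simp only
  rw [min_eq_left (by linarith), max_eq_right (by linarith), add_zero]

lemma val2b : ∀ t, -x ≤ t → t ≤ y → Phi (x, y) t = (0, y - t) := by
  intro t ht ht'
  rw [phi2_eq hx hxy]
  simp only
  rw [min_eq_right (by linarith), max_eq_right (by linarith), add_zero]

lemma val2c : ∀ t, y ≤ t → Phi (x, y) t = (t - y, y - t) := by
  intro t ht
  rw [phi2_eq hx hxy]
  simp only
  rw [min_eq_right (by linarith), max_eq_left (by linarith), zero_add]

lemma cont2 : Continuous (Phi (x, y)) := by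
  rw [phi2_eq hx hxy]; fun_prop

lemma Fval2a : ∀ t, 0 ≤ t → t < -x → F₁₃ (Phi (x, y) t) = (1, -1) := by
  intro t h1 h2
  rw [val2a hx hxy t h2.le]
  exact F_three (by rintro ⟨h, -⟩; simp only at h; linarith)
    (by rintro ⟨h, -⟩; simp only at h; linarith)

lemma Fval2b : ∀ t, -x ≤ t → t < y → F₁₃ (Phi (x, y) t) = (0, -1) := by
  intro t h1 h2
  rw [val2b hx hxy t h1 h2.le]
  exact F_two rfl (by simp only; linarith)

lemma Fval2c : ∀ t, y ≤ t → F₁₃ (Phi (x, y) t) = (1, -1) := by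
  intro t h1
  rw [val2c hx hxy t h1]
  exact F_three (by rintro ⟨-, h⟩; simp only at h; linarith)
    (by rintro ⟨h, h'⟩; simp only at h h'; linarith)

lemma der2a : ∀ t, 0 < t → t < -x → HasDerivAt (Phi (x, y)) ((1:ℝ), (-1:ℝ)) t := by
  intro t h1 h2
  exact deriv_of_eqOn isOpen_Iio (show t ∈ Iio (-x) from h2)
    (fun s hs => val2a hx hxy s (le_of_lt hs)) (hd1 x y t)

lemma der2b : ∀ t, -x < t → t < y → HasDerivAt (Phi (x, y)) ((0:ℝ), (-1:ℝ)) t := by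
  intro t h1 h2
  exact deriv_of_eqOn isOpen_Ioo (show t ∈ Ioo (-x) y from ⟨h1, h2⟩)
    (fun s hs => val2b hx hxy s hs.1.le hs.2.le) (hd4 y t)

lemma der2c : ∀ t, y < t → HasDerivAt (Phi (x, y)) ((1:ℝ), (-1:ℝ)) t := by
  intro t h1
  exact deriv_of_eqOn isOpen_Ioi (show t ∈ Ioi y from h1)
    (fun s hs => val2c hx hxy s (le_of_lt hs)) (hd5 y t)
end case2

section case3
variable {x y : ℝ} (h1 : ¬(0 ≤ y ∧ x + y < 0)) (h2 : ¬(x ≤ 0 ∧ 0 < x + y))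
include h1 h2

lemma phi3_eq : Phi (x, y) = fun t => (x + t, y - t) := by
  funext t
  simp only [Phi, if_neg (show ¬(0 ≤ (x,y).2 ∧ (x,y).1 + (x,y).2 < 0) from h1),
    if_neg (show ¬((x,y).1 ≤ 0 ∧ 0 < (x,y).1 + (x,y).2) from h2)]

lemma cont3 : Continuous (Phi (x, y)) := by
  rw [phi3_eq h1 h2]; fun_prop

lemma Fval3 : ∀ t, 0 ≤ t → F₁₃ (Phi (x, y) t) = (1, -1) := by
  intro t ht
  rw [phi3_eq h1 h2]
  refine F_three ?_ ?_
  · rintro ⟨ha, hb⟩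
    simp only at ha hb
    exact h1 ⟨by linarith, by linarith⟩
  · rintro ⟨ha, hb⟩
    simp only at ha hb
    exact h2 ⟨by linarith, by linarith⟩

lemma der3 : ∀ t, 0 < t → HasDerivAt (Phi (x, y)) ((1:ℝ), (-1:ℝ)) t := by
  intro t _
  rw [phi3_eq h1 h2]
  exact hd1 x y t
end case3

lemma Phi_isIC (X : ℝ × ℝ) : IsNetIntegralCurve F₁₃ X ⊤ (Phi X) := by
  obtain ⟨x, y⟩ := X
  by_cases h1 : 0 ≤ y ∧ x + y < 0
  · obtain ⟨hy, hxy⟩ := h1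
    have hx : x < 0 := by linarith
    have h0 : Phi (x, y) 0 = (x, y) := by
      rw [val1a hy hxy 0 hy]; norm_num
    rcases eq_or_lt_of_le hy with hy0 | hy0
    · refine build2 F₁₃ (x, y) _ (-x) (by linarith) (cont1 hy hxy) h0 (1, 0) (1, -1)
        (fun t ht ht' => Fval1b hy hxy t (by linarith) ht')
        (fun t ht => Fval1c hy hxy t ht)
        (fun t ht ht' => der1b hy hxy t (by linarith) ht')
        (fun t ht => der1c hy hxy t ht)
    · refine build3 F₁₃ (x, y) _ y (-x) hy0 (by linarith) (cont1 hy hxy) h0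
        (1, -1) (1, 0) (1, -1)
        (Fval1a hy hxy) (fun t ht ht' => Fval1b hy hxy t ht ht')
        (Fval1c hy hxy) (der1a hy hxy)
        (fun t ht ht' => der1b hy hxy t ht ht') (der1c hy hxy)
  · by_cases h2 : x ≤ 0 ∧ 0 < x + y
    · obtain ⟨hx, hxy⟩ := h2
      have hy : 0 < y := by linarith
      have h0 : Phi (x, y) 0 = (x, y) := by
        rw [val2a hx hxy 0 (by linarith)]; norm_num
      rcases eq_or_lt_of_le hx with hx0 | hx0
      · refine build2 F₁₃ (x, y) _ y (by linarith) (cont2 hx hxy) h0 (0, -1) (1, -1)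
          (fun t ht ht' => Fval2b hx hxy t (by linarith) ht')
          (fun t ht => Fval2c hx hxy t ht)
          (fun t ht ht' => der2b hx hxy t (by linarith) ht')
          (fun t ht => der2c hx hxy t ht)
      · refine build3 F₁₃ (x, y) _ (-x) y (by linarith) (by linarith) (cont2 hx hxy) h0
          (1, -1) (0, -1) (1, -1)
          (Fval2a hx hxy) (fun t ht ht' => Fval2b hx hxy t ht ht')
          (Fval2c hx hxy) (der2a hx hxy)
          (fun t ht ht' => der2b hx hxy t ht ht') (der2c hx hxy)
    · have h0 : Phi (x, y) 0 = (x, y) := by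
        rw [phi3_eq h1 h2]; norm_num
      exact build1 F₁₃ (x, y) _ (cont3 h1 h2) h0 (1, -1) (Fval3 h1 h2) (der3 h1 h2)

lemma two_valued_eq {g : ℝ → ℝ} {s t : ℝ} (hst : s ≤ t) (hc : ContinuousOn g (Icc s t))
    {a b : ℝ} (hab : a < b) (hval : ∀ r ∈ Icc s t, g r = a ∨ g r = b) : g s = g t := by
  by_contra hne
  have hm : (a + b) / 2 ∈ g '' Icc s t := by
    rcases hval s ⟨le_rfl, hst⟩ with h1 | h1 <;> rcases hval t ⟨hst, le_rfl⟩ with h2 | h2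
    · exact absurd (h1.trans h2.symm) hne
    · exact intermediate_value_Icc hst hc (by rw [h1, h2]; constructor <;> linarith)
    · exact intermediate_value_Icc' hst hc (by rw [h1, h2]; constructor <;> linarith)
    · exact absurd (h1.trans h2.symm) hne
  obtain ⟨r, hr, hgr⟩ := hm
  rcases hval r hr with h | h <;> rw [hgr] at h <;> linarith

lemma Fconst {ψ : ℝ → ℝ × ℝ} {S : Set ℝ} (hS : ∀ a ∈ S, ∀ b ∈ S, Icc a b ⊆ S)
    (hc : ContinuousOn (fun t => F₁₃ (ψ t)) S) {s t : ℝ} (hs : s ∈ S) (ht : t ∈ S) :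
    F₁₃ (ψ s) = F₁₃ (ψ t) := by
  wlog hst : s ≤ t generalizing s t
  · exact (this ht hs (le_of_not_ge hst)).symm
  have hc' := hc.mono (hS s hs t ht)
  refine Prod.ext ?_ ?_
  · exact two_valued_eq hst (continuous_fst.comp_continuousOn hc') zero_lt_one
      (fun r _ => F_fst (ψ r))
  · exact two_valued_eq hst (continuous_snd.comp_continuousOn hc')
      (by norm_num : (-1:ℝ) < 0) (fun r _ => (F_snd (ψ r)).symm)

lemma IC_local {X : ℝ × ℝ} {ψ : ℝ → ℝ × ℝ} (h : IsNetIntegralCurve F₁₃ X ⊤ ψ)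
    (t₀ : ℝ) (ht₀ : 0 ≤ t₀) :
    ∃ ε > 0, ∀ s, 0 ≤ s → s < ε → ψ (t₀ + s) = ψ t₀ + s • F₁₃ (ψ t₀) := by
  obtain ⟨-, -, hcont, D, hDc, hD0, hDsub, hDcl, hstruct, hcover⟩ := h
  obtain ⟨u, huD, hut, hIoc⟩ := hcover t₀ ⟨ht₀, EReal.coe_lt_top _⟩
  obtain ⟨v, hv, huv, hmin, hder, hFc, htend⟩ := hstruct u huD
  have hu0 : 0 ≤ u := (hDsub huD).1
  have htv : (t₀ : EReal) < v := by
    rcases hv with ⟨w, hwD, rfl⟩ | rfl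
    · by_contra hle
      push_neg at hle
      have hw : w ≤ t₀ := by exact_mod_cast hle
      have huw : u < w := by exact_mod_cast huv
      exact Set.eq_empty_iff_forall_notMem.1 hIoc w ⟨⟨huw, hw⟩, hwD⟩
    · exact EReal.coe_lt_top _
  set S : Set ℝ := {t : ℝ | (u : EReal) < (t : EReal) ∧ (t : EReal) < v} with hSdef
  have hSord : ∀ a ∈ S, ∀ b ∈ S, Icc a b ⊆ S := by
    intro a ha b hb r hr
    exact ⟨lt_of_lt_of_le ha.1 (EReal.coe_le_coe_iff.2 hr.1),
      lt_of_le_of_lt (EReal.coe_le_coe_iff.2 hr.2) hb.2⟩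
  set c := F₁₃ (ψ u) with hc
  -- all values of F₁₃ ∘ ψ on S equal c
  obtain ⟨r₀, hur₀, hr₀v⟩ := EReal.lt_iff_exists_real_btwn.1 huv
  have hur₀' : u < r₀ := by exact_mod_cast hur₀
  have hr₀S : r₀ ∈ S := ⟨hur₀, hr₀v⟩
  have hconst : ∀ t ∈ S, F₁₃ (ψ t) = F₁₃ (ψ r₀) := fun t ht => Fconst hSord hFc ht hr₀S
  have hr₀c : F₁₃ (ψ r₀) = c := by
    have hmem : Ioo u r₀ ∈ 𝓝[>] u := Ioo_mem_nhdsGT_of_mem ⟨le_rfl, hur₀'⟩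
    have hev : (fun t => F₁₃ (ψ t)) =ᶠ[𝓝[>] u] (fun _ => F₁₃ (ψ r₀)) :=
      eventuallyEq_of_mem hmem fun t ht => hconst t
        ⟨by exact_mod_cast ht.1, lt_trans (by exact_mod_cast ht.2) hr₀v⟩
    exact tendsto_nhds_unique tendsto_const_nhds (htend.congr' hev)
  have hcval : ∀ t ∈ S, F₁₃ (ψ t) = c := fun t ht => (hconst t ht).trans hr₀c
  have hderc : ∀ t ∈ S, HasDerivAt ψ c t := by
    intro t ht
    have := hder t ht.1 ht.2
    rwa [hcval t ht] at this
  have hcontI : ContinuousOn ψ (Ici 0) := by rwa [eDom_top] at hcont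
  -- main affine formula
  have key : ∀ t, u ≤ t → (t : EReal) < v → ψ t = ψ u + (t - u) • c := by
    intro t htu htvv
    rcases eq_or_lt_of_le htu with rfl | htu'
    · simp
    · have main : ∀ s, u < s → s ≤ t → ψ t = ψ s + (t - s) • c := by
        intro s hs hst
        have hfz : ∀ p ∈ Icc s t, (fun q => ψ q - (q - s) • c) p = (fun q => ψ q - (q - s) • c) s := by
          refine constant_of_has_deriv_right_zero ?_ ?_
          · refine ContinuousOn.sub (hcontI.mono ?_) (by fun_prop)
            intro p hp; exact le_trans (le_trans hu0 hs.le) hp.1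
          · intro p hp
            have hpS : p ∈ S := ⟨by exact_mod_cast lt_of_lt_of_le hs hp.1,
              lt_of_lt_of_le (by exact_mod_cast hp.2 : (p : EReal) < (t : EReal)) htvv.le⟩
            have hd : HasDerivAt (fun q => ψ q - (q - s) • c) 0 p := by
              have h2 : HasDerivAt (fun q : ℝ => (q - s) • c) c p := by
                have := ((hasDerivAt_id p).sub_const s).smul_const c
                simpa using this
              have hd' : HasDerivAt (ψ - fun q : ℝ => (q - s) • c) 0 p := by
                simpa using (hderc p hpS).sub h2
              exact hd'
            exact hd.hasDerivWithinAt
        have := hfz t ⟨hst, le_rfl⟩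
        simp only [sub_self, zero_smul, sub_zero] at this
        have h3 : ψ t - (t - s) • c = ψ s := this
        rw [← h3]; abel
      -- limit s → u⁺
      have h1 : Tendsto ψ (𝓝[>] u) (𝓝 (ψ u)) :=
        (hcontI u hu0).tendsto.mono_left (nhdsWithin_mono u fun r hr => hu0.trans (le_of_lt hr))
      have h2 : Tendsto (fun s => (t - s) • c) (𝓝[>] u) (𝓝 ((t - u) • c)) :=
        (((continuous_const.sub continuous_id).smul continuous_const).tendsto u).mono_left
          nhdsWithin_le_nhds
      have hlim := h1.add h2
      have hev2 : (fun s => ψ s + (t - s) • c) =ᶠ[𝓝[>] u] (fun _ => ψ t) :=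
        eventuallyEq_of_mem (Ioo_mem_nhdsGT_of_mem ⟨le_rfl, htu'⟩)
          (fun s hs => (main s hs.1 hs.2.le).symm)
      exact tendsto_nhds_unique (hlim.congr' hev2) tendsto_const_nhds |>.symm
  have hct₀ : F₁₃ (ψ t₀) = c := by
    rcases eq_or_lt_of_le hut with rfl | hlt
    · rfl
    · exact hcval t₀ ⟨by exact_mod_cast hlt, htv⟩
  obtain ⟨ε, hε, hεv⟩ : ∃ ε > 0, ∀ s, 0 ≤ s → s < ε → ((t₀ + s : ℝ) : EReal) < v := by
    rcases hv with ⟨w, -, rfl⟩ | rfl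
    · have hw : t₀ < w := by exact_mod_cast htv
      exact ⟨w - t₀, by linarith, fun s h1' h2' => by
        exact_mod_cast (by linarith : t₀ + s < w)⟩
    · exact ⟨1, one_pos, fun s _ _ => EReal.coe_lt_top _⟩
  refine ⟨ε, hε, fun s hs1 hs2 => ?_⟩
  rw [hct₀, key (t₀ + s) (by linarith) (hεv s hs1 hs2), key t₀ hut htv]
  have hring : t₀ + s - u = (t₀ - u) + s := by ring
  rw [hring, add_smul, add_assoc]

lemma IC_unique {X : ℝ × ℝ} {ψ χ : ℝ → ℝ × ℝ} (hψ : IsNetIntegralCurve F₁₃ X ⊤ ψ)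
    (hχ : IsNetIntegralCurve F₁₃ X ⊤ χ) : ∀ t, 0 ≤ t → ψ t = χ t := by
  intro t₁ ht₁
  have hψ0 : ψ 0 = X := hψ.2.1
  have hχ0 : χ 0 = X := hχ.2.1
  have hψc : ContinuousOn ψ (Ici 0) := by have := hψ.2.2.1; rwa [eDom_top] at this
  have hχc : ContinuousOn χ (Ici 0) := by have := hχ.2.2.1; rwa [eDom_top] at this
  set A := {t : ℝ | t ∈ Icc 0 t₁ ∧ ∀ s ∈ Icc 0 t, ψ s = χ s} with hA
  have h0A : (0:ℝ) ∈ A := ⟨⟨le_rfl, ht₁⟩, fun s hs => by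
    have : s = 0 := le_antisymm hs.2 hs.1
    rw [this, hψ0, hχ0]⟩
  have hbdd : BddAbove A := ⟨t₁, fun t ht => ht.1.2⟩
  set r := sSup A with hr
  have hr0 : 0 ≤ r := le_csSup hbdd h0A
  have hrle : r ≤ t₁ := csSup_le ⟨0, h0A⟩ fun t ht => ht.1.2
  have heq_lt : ∀ s, 0 ≤ s → s < r → ψ s = χ s := by
    intro s hs hsr
    obtain ⟨t, htA, hst⟩ := exists_lt_of_lt_csSup ⟨0, h0A⟩ hsr
    exact htA.2 s ⟨hs, hst.le⟩
  have heq_r : ψ r = χ r := by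
    rcases eq_or_lt_of_le hr0 with h | h
    · rw [← h, hψ0, hχ0]
    · have hcl : r ∈ closure (Ioo 0 r) := by
        rw [closure_Ioo (ne_of_lt h)]; exact ⟨hr0, le_rfl⟩
      have hne : (𝓝[Ioo 0 r] r).NeBot := mem_closure_iff_nhdsWithin_neBot.1 hcl
      have hsub : Ioo 0 r ⊆ Ici 0 := fun p hp => hp.1.le
      have h1 : Tendsto ψ (𝓝[Ioo 0 r] r) (𝓝 (ψ r)) :=
        ((hψc r hr0).mono hsub).tendsto
      have h2 : Tendsto χ (𝓝[Ioo 0 r] r) (𝓝 (χ r)) :=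
        ((hχc r hr0).mono hsub).tendsto
      have hev : ψ =ᶠ[𝓝[Ioo 0 r] r] χ :=
        eventuallyEq_of_mem self_mem_nhdsWithin fun s hs => heq_lt s hs.1.le hs.2
      exact tendsto_nhds_unique (h1.congr' hev) h2
  rcases eq_or_lt_of_le hrle with hrt | hrt
  · rw [← hrt]; exact heq_r
  · exfalso
    obtain ⟨ε₁, hε₁, h₁⟩ := IC_local hψ r hr0
    obtain ⟨ε₂, hε₂, h₂⟩ := IC_local hχ r hr0
    set ε := min (min ε₁ ε₂) (t₁ - r) with hε
    have hεpos : 0 < ε := lt_min (lt_min hε₁ hε₂) (by linarith)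
    have hmem : r + ε/2 ∈ A := by
      refine ⟨⟨by linarith, by
        have : ε ≤ t₁ - r := min_le_right _ _
        linarith⟩, fun s hs => ?_⟩
      rcases le_or_gt s r with hsr | hsr
      · rcases eq_or_lt_of_le hsr with rfl | hlt
        · exact heq_r
        · exact heq_lt s hs.1 hlt
      · have hse : s - r < ε := by
          have := hs.2
          have : s - r ≤ ε/2 := by linarith
          linarith
        have he1 : s - r < ε₁ := lt_of_lt_of_le hse ((min_le_left _ _).trans (min_le_left _ _))
        have he2 : s - r < ε₂ := lt_of_lt_of_le hse ((min_le_left _ _).trans (min_le_right _ _))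
        have e1 := h₁ (s - r) (by linarith) he1
        have e2 := h₂ (s - r) (by linarith) he2
        rw [show r + (s - r) = s by ring] at e1 e2
        rw [e1, e2, heq_r]
    have := le_csSup hbdd hmem
    linarith

lemma discont1 {x : ℝ} (hx : x < 0) (t : ℝ) (ht : 0 < t) :
    ¬ ContinuousAt (fun X : ℝ × ℝ => Phi X t) (x, 0) := by
  intro h
  have hseq : Tendsto (fun ε : ℝ => ((x, -ε) : ℝ × ℝ)) (𝓝[>] (0:ℝ)) (𝓝 ((x:ℝ), (0:ℝ))) := by
    have : Tendsto (fun ε : ℝ => ((x, -ε) : ℝ × ℝ)) (𝓝 (0:ℝ)) (𝓝 ((x:ℝ), -(0:ℝ))) :=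
      (continuous_const.prodMk continuous_neg).tendsto 0
    simpa using this.mono_left nhdsWithin_le_nhds
  have h2 := (h.tendsto).comp hseq
  have hev : (fun ε : ℝ => Phi (x, -ε) t) =ᶠ[𝓝[>] (0:ℝ)] (fun ε => (x + t, -ε - t)) := by
    refine eventuallyEq_of_mem self_mem_nhdsWithin fun ε (hε : 0 < ε) => ?_
    rw [phi3_eq (by rintro ⟨a, -⟩; linarith)
      (by rintro ⟨-, b⟩; linarith)]
  have h3 : Tendsto (fun ε : ℝ => ((x + t, -ε - t) : ℝ × ℝ)) (𝓝[>] (0:ℝ))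
      (𝓝 ((x + t, -t) : ℝ × ℝ)) := by
    have : Tendsto (fun ε : ℝ => ((x + t, -ε - t) : ℝ × ℝ)) (𝓝 (0:ℝ)) (𝓝 ((x + t, -0 - t) : ℝ × ℝ)) :=
      (continuous_const.prodMk (continuous_neg.sub continuous_const)).tendsto 0
    simpa using this.mono_left nhdsWithin_le_nhds
  have hkey : Phi (x, 0) t = (x + t, -t) := tendsto_nhds_unique (h2.congr' hev) h3
  rw [phi1_eq le_rfl (by linarith)] at hkey
  have h4 := congrArg Prod.snd hkey
  simp only [max_eq_right (by linarith : 0 - t ≤ 0)] at h4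
  rcases le_or_gt (-(x + t)) 0 with h5 | h5
  · rw [min_eq_left h5, zero_add] at h4
    have : x = 0 := by linarith [neg_injective h4]
    exact absurd this (ne_of_lt hx)
  · rw [min_eq_right h5.le, add_zero] at h4
    linarith

lemma discont2 {y : ℝ} (hy : 0 < y) (t : ℝ) (ht : 0 < t) :
    ¬ ContinuousAt (fun X : ℝ × ℝ => Phi X t) (0, y) := by
  intro h
  have hseq : Tendsto (fun ε : ℝ => ((ε, y) : ℝ × ℝ)) (𝓝[>] (0:ℝ)) (𝓝 ((0:ℝ), (y:ℝ))) := by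
    have : Tendsto (fun ε : ℝ => ((ε, y) : ℝ × ℝ)) (𝓝 (0:ℝ)) (𝓝 ((0:ℝ), (y:ℝ))) :=
      (continuous_id.prodMk continuous_const).tendsto 0
    exact this.mono_left nhdsWithin_le_nhds
  have h2 := (h.tendsto).comp hseq
  have hev : (fun ε : ℝ => Phi (ε, y) t) =ᶠ[𝓝[>] (0:ℝ)] (fun ε => (ε + t, y - t)) := by
    refine eventuallyEq_of_mem self_mem_nhdsWithin fun ε (hε : 0 < ε) => ?_
    rw [phi3_eq (by rintro ⟨-, b⟩; linarith)
      (by rintro ⟨a, -⟩; linarith)]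
  have h3 : Tendsto (fun ε : ℝ => ((ε + t, y - t) : ℝ × ℝ)) (𝓝[>] (0:ℝ))
      (𝓝 ((t, y - t) : ℝ × ℝ)) := by
    have : Tendsto (fun ε : ℝ => ((ε + t, y - t) : ℝ × ℝ)) (𝓝 (0:ℝ)) (𝓝 ((0 + t, y - t) : ℝ × ℝ)) :=
      ((continuous_id.add continuous_const).prodMk continuous_const).tendsto 0
    simpa using this.mono_left nhdsWithin_le_nhds
  have hkey : Phi (0, y) t = (t, y - t) := tendsto_nhds_unique (h2.congr' hev) h3
  rw [phi2_eq le_rfl (by linarith)] at hkey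
  have h4 := congrArg Prod.fst hkey
  simp only [zero_add, min_eq_right ht.le] at h4
  rcases le_or_gt (t - y) 0 with h5 | h5
  · rw [max_eq_right h5] at h4
    linarith
  · rw [max_eq_left h5.le] at h4
    linarith

lemma cont_origin (t : ℝ) (ht : 0 ≤ t) :
    ContinuousAt (fun X : ℝ × ℝ => Phi X t) ((0:ℝ), (0:ℝ)) := by
  set L : ℝ × ℝ := (t, -t) with hL
  set f1 : ℝ × ℝ → ℝ × ℝ := fun X => (X.1 + t, max (X.2 - t) 0 + min (-(X.1 + t)) 0) with hf1
  set f2 : ℝ × ℝ → ℝ × ℝ := fun X => (min (X.1 + t) 0 + max (t - X.2) 0, X.2 - t) with hf2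
  set f3 : ℝ × ℝ → ℝ × ℝ := fun X => (X.1 + t, X.2 - t) with hf3
  have e1 : f1 ((0:ℝ), (0:ℝ)) = L := by
    simp only [hf1, hL]
    rw [zero_add, zero_sub, max_eq_right (by linarith), min_eq_left (by linarith), zero_add]
  have e2 : f2 ((0:ℝ), (0:ℝ)) = L := by
    simp only [hf2, hL]
    rw [zero_add, zero_sub, sub_zero, min_eq_right ht, max_eq_left ht, zero_add]
  have e3 : f3 ((0:ℝ), (0:ℝ)) = L := by
    simp only [hf3, hL]; rw [zero_add, zero_sub]
  have hbr : ∀ X : ℝ × ℝ, Phi X t = f1 X ∨ Phi X t = f2 X ∨ Phi X t = f3 X := by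
    intro X
    by_cases h1 : 0 ≤ X.2 ∧ X.1 + X.2 < 0
    · exact Or.inl (by simp only [Phi, if_pos h1, hf1])
    · by_cases h2 : X.1 ≤ 0 ∧ 0 < X.1 + X.2
      · exact Or.inr (Or.inl (by simp only [Phi, if_neg h1, if_pos h2, hf2]))
      · exact Or.inr (Or.inr (by simp only [Phi, if_neg h1, if_neg h2, hf3]))
  have hc1 : Continuous f1 := by fun_prop
  have hc2 : Continuous f2 := by fun_prop
  have hc3 : Continuous f3 := by fun_prop
  have hP0 : Phi ((0:ℝ), (0:ℝ)) t = L := by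
    rcases hbr ((0:ℝ), (0:ℝ)) with h | h | h <;> rw [h] <;> [exact e1; exact e2; exact e3]
  have hten : ∀ (f : ℝ × ℝ → ℝ × ℝ), Continuous f → f ((0:ℝ), (0:ℝ)) = L →
      Tendsto (fun X => dist (f X) L) (𝓝 ((0:ℝ), (0:ℝ))) (𝓝 0) := by
    intro f hf hfL
    have := (hf.tendsto (((0:ℝ), (0:ℝ)) : ℝ × ℝ)).dist (tendsto_const_nhds (x := L))
    rwa [hfL, dist_self] at this
  rw [ContinuousAt, hP0, tendsto_iff_dist_tendsto_zero]
  refine squeeze_zero (fun X => dist_nonneg)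
    (g := fun X => dist (f1 X) L + dist (f2 X) L + dist (f3 X) L) (fun X => ?_) ?_
  · have d1 : (0:ℝ) ≤ dist (f1 X) L := dist_nonneg
    have d2 : (0:ℝ) ≤ dist (f2 X) L := dist_nonneg
    have d3 : (0:ℝ) ≤ dist (f3 X) L := dist_nonneg
    rcases hbr X with h | h | h <;> rw [h] <;> linarith
  · have := ((hten f1 hc1 e1).add (hten f2 hc2 e2)).add (hten f3 hc3 e3)
    simpa using this

/-- For the field `F₁₃`: (i) through every point of `ℝ²` there is a
unique complete integral curve, giving a semiflow `Φ`; (ii) for every point `P` of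
`E¹ = {(x,0) : x < 0}` or `E² = {(0,y) : y > 0}` and every `t > 0`, `X ↦ Φ(X,t)` is
discontinuous at `P`; (iii) for every `t ≥ 0`, `X ↦ Φ(X,t)` is continuous at the origin. -/
theorem semiflow_discontinuous_along_event_sets :
    ∃ Φ : ℝ × ℝ → ℝ → ℝ × ℝ,
      (∀ X : ℝ × ℝ, IsNetIntegralCurve F₁₃ X (⊤ : EReal) (Φ X)) ∧
      (∀ (X : ℝ × ℝ) (ψ : ℝ → ℝ × ℝ), IsNetIntegralCurve F₁₃ X (⊤ : EReal) ψ →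
        ∀ t : ℝ, 0 ≤ t → ψ t = Φ X t) ∧
      (∀ P : ℝ × ℝ, ((P.2 = 0 ∧ P.1 < 0) ∨ (P.1 = 0 ∧ 0 < P.2)) →
        ∀ t : ℝ, 0 < t → ¬ ContinuousAt (fun X : ℝ × ℝ => Φ X t) P) ∧
      (∀ t : ℝ, 0 ≤ t → ContinuousAt (fun X : ℝ × ℝ => Φ X t) ((0 : ℝ), (0 : ℝ))) := by
  refine ⟨Phi, Phi_isIC, fun X ψ hψ t ht => IC_unique hψ (Phi_isIC X) t ht, ?_, cont_origin⟩
  rintro P (⟨h1, h2⟩ | ⟨h1, h2⟩) t ht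
  · obtain ⟨x, y⟩ := P
    have hy : y = 0 := h1
    subst hy
    exact discont1 h2 t ht
  · obtain ⟨x, y⟩ := P
    have hx : x = 0 := h1
    subst hx
    exact discont2 h2 t ht
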